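/- Let Φ be a finite reduced crystallographic irreducible root system in a finite-dimensional real inner product space with a fixed base Δ, and let T be a closed subset of Φ such that the closure [T ∪ −T] is a proper subset of Φ. Then for any simple root α ∈ Δ with α ∈ [T ∪ −T], there exists a simple root path (β₁, β₂, …, β_k) in Δ with β₁ = α, with βᵢ ∈ [T ∪ −T] for all 1 ≤ i ≤ k−1, and with β_k ∉ [T ∪ −T]. -/

import Mathlib

open scoped RealInnerProductSpace

/-- A finite reduced crystallographic root system in a finite-dimensional real
inner product space. -/
structure IsRootSystem {V : Type*} [NormedAddCommGroup V] [InnerProductSpace ℝ V]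
    [FiniteDimensional ℝ V] (Φ : Set V) : Prop where
  finite : Φ.Finite
  ne_zero : ∀ α ∈ Φ, α ≠ 0
  spans : Submodule.span ℝ Φ = ⊤
  reduced : ∀ α ∈ Φ, ∀ t : ℝ, t • α ∈ Φ → t = 1 ∨ t = -1
  reflection_mem : ∀ α ∈ Φ, ∀ β ∈ Φ, β - (2 * ⟪β, α⟫ / ⟪α, α⟫) • α ∈ Φ
  crystallographic : ∀ α ∈ Φ, ∀ β ∈ Φ, ∃ n : ℤ, 2 * ⟪β, α⟫ / ⟪α, α⟫ = (n : ℝ)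

/-- A subset `S` of a root system `Φ` is closed if for any `x, y ∈ S`,
`x + y ∈ Φ` implies `x + y ∈ S`. -/
def IsClosedSubset {V : Type*} [NormedAddCommGroup V] [InnerProductSpace ℝ V]
    (Φ S : Set V) : Prop :=
  S ⊆ Φ ∧ ∀ x ∈ S, ∀ y ∈ S, x + y ∈ Φ → x + y ∈ S

/-- The closure `[S]` of `S ⊆ Φ`: the smallest closed subset of `Φ` containing `S`,
i.e. the intersection of all closed subsets of `Φ` containing `S`. -/
def rootClosure {V : Type*} [NormedAddCommGroup V] [InnerProductSpace ℝ V]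
    (Φ S : Set V) : Set V :=
  ⋂₀ {U : Set V | IsClosedSubset Φ U ∧ S ⊆ U}

/-- A base (set of simple roots) of a root system `Φ`: a linearly independent
subset such that every root is an integer combination of elements of `Δ` with all
coefficients of the same sign. -/
def IsBase {V : Type*} [NormedAddCommGroup V] [InnerProductSpace ℝ V]
    (Φ Δ : Set V) : Prop :=
  Δ ⊆ Φ ∧ LinearIndependent ℝ ((↑) : Δ → V) ∧
    ∀ α ∈ Φ, ∃ c : V →₀ ℤ, (c.support : Set V) ⊆ Δ ∧
      α = c.sum (fun v n => (n : ℝ) • v) ∧ ((∀ v, 0 ≤ c v) ∨ (∀ v, c v ≤ 0))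

/-- A root system is irreducible if it cannot be partitioned into two nonempty
orthogonal subsets. -/
def IsIrreducibleRootSystem {V : Type*} [NormedAddCommGroup V] [InnerProductSpace ℝ V]
    (Φ : Set V) : Prop :=
  ¬ ∃ S T : Set V, S.Nonempty ∧ T.Nonempty ∧ Φ = S ∪ T ∧
      ∀ x ∈ S, ∀ y ∈ T, ⟪x, y⟫ = 0

/-- A simple root path: a finite sequence `β 0, β 1, …, β (k-1)` of pairwise
distinct simple roots in `Δ` such that consecutive roots are non-orthogonal. -/
def IsSimpleRootPath {V : Type*} [NormedAddCommGroup V] [InnerProductSpace ℝ V]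
    (Δ : Set V) (k : ℕ) (β : ℕ → V) : Prop :=
  1 ≤ k ∧ (∀ i < k, β i ∈ Δ) ∧ (∀ i < k, ∀ j < k, β i = β j → i = j) ∧
    ∀ i, i + 1 < k → ⟪β i, β (i + 1)⟫ ≠ 0

section Aux
variable {V : Type*} [NormedAddCommGroup V] [InnerProductSpace ℝ V] [FiniteDimensional ℝ V]
variable {Φ Δ : Set V}

lemma RS.neg_mem (hΦ : IsRootSystem Φ) {α : V} (hα : α ∈ Φ) : -α ∈ Φ := by
  have h := hΦ.reflection_mem α hα α hα
  have h0 : ⟪α, α⟫ ≠ 0 := inner_self_ne_zero.2 (hΦ.ne_zero α hα)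
  have h2 : 2 * ⟪α, α⟫ / ⟪α, α⟫ = (2:ℝ) := by field_simp
  rw [h2] at h
  have : α - (2:ℝ) • α = -α := by module
  rwa [this] at h

lemma RS.sub_mem (hΦ : IsRootSystem Φ) {α β : V} (hα : α ∈ Φ) (hβ : β ∈ Φ)
    (hpos : 0 < ⟪α, β⟫) (hne : α ≠ β) : α - β ∈ Φ := by
  have hα0 := hΦ.ne_zero α hα
  have hβ0 := hΦ.ne_zero β hβ
  have hαα : (0:ℝ) < ⟪α, α⟫ :=
    lt_of_le_of_ne real_inner_self_nonneg (Ne.symm (inner_self_ne_zero.2 hα0))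
  have hββ : (0:ℝ) < ⟪β, β⟫ :=
    lt_of_le_of_ne real_inner_self_nonneg (Ne.symm (inner_self_ne_zero.2 hβ0))
  obtain ⟨m, hm⟩ := hΦ.crystallographic β hβ α hα
  obtain ⟨n, hn⟩ := hΦ.crystallographic α hα β hβ
  -- hm : 2 * ⟪α, β⟫ / ⟪β, β⟫ = m ; hn : 2 * ⟪β, α⟫ / ⟪α, α⟫ = n
  have hCS : ⟪α, β⟫ < ‖α‖ * ‖β‖ := by
    rw [inner_lt_norm_mul_iff_real]
    intro hEq
    have hnα : ‖α‖ ≠ 0 := norm_ne_zero_iff.2 hα0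
    have hβeq : β = (‖β‖ / ‖α‖) • α := by
      rw [div_eq_inv_mul, mul_smul, hEq, smul_smul, inv_mul_cancel₀ hnα, one_smul]
    have := hΦ.reduced α hα (‖β‖ / ‖α‖) (hβeq ▸ hβ)
    rcases this with h1 | h1
    · exact hne (show β = α by rw [hβeq, h1, one_smul]).symm
    · have : (0:ℝ) < ‖β‖ / ‖α‖ :=
        div_pos (norm_pos_iff.2 hβ0) (norm_pos_iff.2 hα0)
      rw [h1] at this; linarith
  have hm0 : (0:ℝ) < (m:ℝ) := by
    rw [← hm]; exact div_pos (by linarith) hββ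
  have hn0 : (0:ℝ) < (n:ℝ) := by
    rw [← hn, real_inner_comm]
    exact div_pos (by linarith) hαα
  have hm1' : 1 ≤ m := by exact_mod_cast hm0
  have hn1' : 1 ≤ n := by exact_mod_cast hn0
  have hm1 : (1:ℝ) ≤ (m:ℝ) := by exact_mod_cast hm1'
  have hn1 : (1:ℝ) ≤ (n:ℝ) := by exact_mod_cast hn1'
  have hprod : (m:ℝ) * (n:ℝ) < 4 := by
    have hαn : ⟪α, α⟫ = ‖α‖ ^ 2 := real_inner_self_eq_norm_sq α
    have hβn : ⟪β, β⟫ = ‖β‖ ^ 2 := real_inner_self_eq_norm_sq β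
    have hba : ⟪β, α⟫ = ⟪α, β⟫ := real_inner_comm α β
    rw [← hm, ← hn, hba, hαn, hβn]
    have hnαp : (0:ℝ) < ‖α‖ := norm_pos_iff.2 hα0
    have hnβp : (0:ℝ) < ‖β‖ := norm_pos_iff.2 hβ0
    rw [div_mul_div_comm, div_lt_iff₀ (by positivity)]
    nlinarith [hCS, hpos]
  have hmn : m = 1 ∨ n = 1 := by
    have : m * n < 4 := by exact_mod_cast hprod
    by_contra hcon
    push_neg at hcon
    have : 2 ≤ m := by omega
    have : 2 ≤ n := by omega
    nlinarith
  rcases hmn with h1 | h1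
  · have h := hΦ.reflection_mem β hβ α hα
    rw [hm, h1] at h
    simpa using h
  · have h := hΦ.reflection_mem α hα β hβ
    rw [hn, h1] at h
    simp only [Int.cast_one, one_smul] at h
    have := RS.neg_mem hΦ h
    rwa [neg_sub] at this


lemma RS.base_unique (hli : LinearIndependent ℝ ((↑) : Δ → V)) {c d : V →₀ ℝ}
    (hc : (c.support : Set V) ⊆ Δ) (hd : (d.support : Set V) ⊆ Δ)
    (h : c.sum (fun v r => r • v) = d.sum (fun v r => r • v)) : c = d := by
  classical
  have hli' : LinearIndependent ℝ (fun x => x : Δ → V) := hli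
  have key := (linearIndepOn_iff (v := id) (s := Δ)).1 hli' (c - d) ?_ ?_
  · exact sub_eq_zero.1 key
  · rw [Finsupp.mem_supported]
    refine subset_trans ?_ (Set.union_subset hc hd)
    intro v hv
    have := Finsupp.support_sub (f := c) (g := d) hv
    simpa using this
  · rw [Finsupp.linearCombination_apply]
    have h2 : ((c - d).sum fun i a => a • i) = 0 := by
      rw [Finsupp.sum_sub_index (fun a b₁ b₂ => sub_smul b₁ b₂ a), h, sub_self]
    simpa using h2

/-- Convert an integer representation into a real one. -/
lemma RS.intCast_sum (c : V →₀ ℤ) :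
    (c.mapRange (Int.cast : ℤ → ℝ) Int.cast_zero).sum (fun v r => r • v)
      = c.sum (fun v n => (n : ℝ) • v) :=
  Finsupp.sum_mapRange_index (by simp)

lemma RS.exists_functional (hli : LinearIndependent ℝ ((↑) : Δ → V)) :
    ∃ f : V →ₗ[ℝ] ℝ, ∀ v ∈ Δ, f v = 1 := by
  classical
  have hli : LinearIndepOn ℝ id Δ := hli
  refine ⟨(Module.Basis.extend hli).constr ℝ (fun i => if (i : V) ∈ Δ then (1:ℝ) else 0), ?_⟩
  intro v hv
  have hvmem : v ∈ hli.extend (Set.subset_univ Δ) := hli.subset_extend _ hv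
  have hb : (Module.Basis.extend hli) ⟨v, hvmem⟩ = v := Module.Basis.extend_apply_self hli ⟨v, hvmem⟩
  conv_lhs => rw [← hb]
  rw [Module.Basis.constr_basis]
  simp [hv]

lemma RS.span_orth {A B : Set V} (h : ∀ x ∈ A, ∀ y ∈ B, ⟪x, y⟫ = 0) :
    ∀ x ∈ Submodule.span ℝ A, ∀ y ∈ Submodule.span ℝ B, ⟪x, y⟫ = 0 := by
  have step1 : ∀ a ∈ A, ∀ y ∈ Submodule.span ℝ B, ⟪a, y⟫ = 0 := by
    intro a ha y hy
    have hle : Submodule.span ℝ B ≤ LinearMap.ker (innerₛₗ ℝ a) := by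
      rw [Submodule.span_le]
      intro b hb
      simp only [SetLike.mem_coe, LinearMap.mem_ker, innerₛₗ_apply_apply]
      exact h a ha b hb
    simpa using hle hy
  intro x hx y hy
  have hle : Submodule.span ℝ A ≤ LinearMap.ker (innerₛₗ ℝ y) := by
    rw [Submodule.span_le]
    intro a ha
    simp only [SetLike.mem_coe, LinearMap.mem_ker, innerₛₗ_apply_apply]
    rw [real_inner_comm]
    exact step1 a ha y hy
  have := hle hx
  simp only [LinearMap.mem_ker, innerₛₗ_apply_apply] at this
  rwa [real_inner_comm]


lemma RS.subset_of_base_subset (hΦ : IsRootSystem Φ) (hΔ : IsBase Φ Δ) {C : Set V}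
    (hC : IsClosedSubset Φ C) (hCneg : ∀ x ∈ C, -x ∈ C) (hΔC : Δ ⊆ C) : Φ ⊆ C := by
  classical
  have key : ∀ n : ℕ, ∀ α ∈ Φ, ∀ c : V →₀ ℤ, (c.support : Set V) ⊆ Δ →
      α = c.sum (fun v m => (m : ℝ) • v) → (∀ v, 0 ≤ c v) →
      (c.sum fun _ m => m).toNat ≤ n → α ∈ C := by
    intro n
    induction n with
    | zero =>
      intro α hαΦ c hsupp hsum hpos hn
      exfalso
      have hc0 : c = 0 := by
        ext v
        simp only [Finsupp.coe_zero, Pi.zero_apply]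
        by_contra hv
        have hvs : v ∈ c.support := Finsupp.mem_support_iff.2 (by simpa using hv)
        have h1 : (1:ℤ) ≤ c v := by have := hpos v; omega
        have hsum_ge : (1:ℤ) ≤ c.sum fun _ m => m :=
          le_trans h1 (Finset.single_le_sum (f := fun v => c v) (fun i _ => hpos i) hvs)
        omega
      rw [hc0] at hsum
      simp at hsum
      exact hΦ.ne_zero α hαΦ hsum
    | succ n ih =>
      intro α hαΦ c hsupp hsum hpos hn
      by_cases hαΔ : α ∈ Δ
      · exact hΔC hαΔ
      have hαα : (0:ℝ) < ⟪α, α⟫ :=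
        lt_of_le_of_ne real_inner_self_nonneg (Ne.symm (inner_self_ne_zero.2 (hΦ.ne_zero α hαΦ)))
      have hβex : ∃ β ∈ c.support, 0 < c β ∧ 0 < ⟪α, β⟫ := by
        by_contra hno
        push_neg at hno
        have hin : ⟪α, α⟫ = ∑ v ∈ c.support, (c v : ℝ) * ⟪α, v⟫ := by
          nth_rewrite 2 [hsum]
          rw [Finsupp.sum, inner_sum]
          exact Finset.sum_congr rfl fun v _ => real_inner_smul_right α v _
        have hle : ∑ v ∈ c.support, (c v : ℝ) * ⟪α, v⟫ ≤ 0 := by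
          apply Finset.sum_nonpos
          intro v hv
          have hcv := hpos v
          rcases lt_or_eq_of_le hcv with hlt | heq
          · have hip : ⟪α, v⟫ ≤ 0 := hno v hv hlt
            have hge : (0:ℝ) ≤ (c v : ℝ) := by exact_mod_cast hcv
            exact mul_nonpos_iff.2 (Or.inl ⟨hge, hip⟩)
          · rw [← heq]; simp
        rw [hin] at hαα
        linarith
      obtain ⟨β, hβs, hβpos, hβip⟩ := hβex
      have hβΔ : β ∈ Δ := hsupp hβs
      have hβΦ : β ∈ Φ := hΔ.1 hβΔ
      have hαβ : α ≠ β := fun h => hαΔ (h ▸ hβΔ)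
      have hsub : α - β ∈ Φ := RS.sub_mem hΦ hαΦ hβΦ hβip hαβ
      set c' : V →₀ ℤ := c - Finsupp.single β 1 with hc'
      have hsum' : α - β = c'.sum (fun v m => (m : ℝ) • v) := by
        rw [hc', Finsupp.sum_sub_index (by intro a b₁ b₂; push_cast; rw [sub_smul]),
          Finsupp.sum_single_index (by simp), Int.cast_one, one_smul, hsum]
      have hsupp' : (c'.support : Set V) ⊆ Δ := by
        intro v hv
        have hmem := Finsupp.support_sub (f := c) (g := Finsupp.single β 1)
          (Finset.mem_coe.1 hv)
        rcases Finset.mem_union.1 hmem with h | h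
        · exact hsupp h
        · have hvb : v = β := by
            have := Finsupp.support_single_subset h
            simpa using this
          exact hvb ▸ hβΔ
      have hpos' : ∀ v, 0 ≤ c' v := by
        intro v
        by_cases hvβ : v = β
        · subst hvβ
          rw [hc']
          simp only [Finsupp.sub_apply, Finsupp.single_eq_same]
          omega
        · rw [hc']
          simp only [Finsupp.sub_apply, Finsupp.single_apply, if_neg (Ne.symm hvβ)]
          have := hpos v; omega
      have hsum_le : (c'.sum fun _ m => m).toNat ≤ n := by
        have h1 : (c'.sum fun _ m => m) = (c.sum fun _ m => m) - 1 := by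
          rw [hc', Finsupp.sum_sub_index (fun a b₁ b₂ => rfl),
            Finsupp.sum_single_index rfl]
        have h2 : (1:ℤ) ≤ c.sum fun _ m => m :=
          le_trans hβpos (Finset.single_le_sum (f := fun v => c v) (fun i _ => hpos i) hβs)
        omega
      have hγC : α - β ∈ C := ih (α - β) hsub c' hsupp' hsum' hpos' hsum_le
      have hβC : β ∈ C := hΔC hβΔ
      have hfin := hC.2 (α - β) hγC β hβC (by rwa [sub_add_cancel])
      rwa [sub_add_cancel] at hfin
  intro α hαΦ
  obtain ⟨c, hsupp, hsum, hsign⟩ := hΔ.2.2 α hαΦ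
  rcases hsign with hpos | hneg
  · exact key _ α hαΦ c hsupp hsum hpos le_rfl
  · have hnegΦ : -α ∈ Φ := RS.neg_mem hΦ hαΦ
    have hrep : -α = (0 - c : V →₀ ℤ).sum (fun v m => (m : ℝ) • v) := by
      rw [Finsupp.sum_sub_index (by intro a b₁ b₂; push_cast; rw [sub_smul]), ← hsum]
      simp
    have hsupp0 : (((0 - c : V →₀ ℤ)).support : Set V) ⊆ Δ := by
      intro v hv
      have hmem := Finsupp.support_sub (f := (0 : V →₀ ℤ)) (g := c) (Finset.mem_coe.1 hv)
      simp only [Finsupp.support_zero, Finset.empty_union] at hmem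
      exact hsupp hmem
    have hpos0 : ∀ v, 0 ≤ (0 - c : V →₀ ℤ) v := by
      intro v
      simp only [Finsupp.sub_apply, Finsupp.coe_zero, Pi.zero_apply]
      have := hneg v; omega
    have hmem := key _ (-α) hnegΦ _ hsupp0 hrep hpos0 le_rfl
    have := hCneg _ hmem
    rwa [neg_neg] at this


lemma RS.no_escape (hΦ : IsRootSystem Φ) (hΔ : IsBase Φ Δ) {β γ : V} (hβΔ : β ∈ Δ)
    (hγ : γ ∈ Φ) (hsumΦ : γ + β ∈ Φ) (c' : V →₀ ℤ)
    (hs : (c'.support : Set V) ⊆ Δ) (hrep : γ = c'.sum (fun v m => (m : ℝ) • v))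
    (hpos : ∀ v, 0 ≤ c' v) (hβ0 : c' β = 0)
    (horth : ∀ v ∈ c'.support, ⟪v, β⟫ = 0) : False := by
  classical
  have hβΦ : β ∈ Φ := hΔ.1 hβΔ
  have hββ : (0:ℝ) < ⟪β, β⟫ :=
    lt_of_le_of_ne real_inner_self_nonneg (Ne.symm (inner_self_ne_zero.2 (hΦ.ne_zero β hβΦ)))
  have hγβ : ⟪γ, β⟫ = 0 := by
    rw [hrep, Finsupp.sum, sum_inner]
    apply Finset.sum_eq_zero
    intro v hv
    rw [real_inner_smul_left, horth v hv, mul_zero]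
  have hαβ : ⟪γ + β, β⟫ = ⟪β, β⟫ := by rw [inner_add_left, hγβ, zero_add]
  have h2 : 2 * ⟪γ + β, β⟫ / ⟪β, β⟫ = (2:ℝ) := by rw [hαβ]; field_simp
  have hrefl := hΦ.reflection_mem β hβΦ (γ + β) hsumΦ
  rw [h2] at hrefl
  have hγβΦ : γ - β ∈ Φ := by
    have hmod : γ + β - (2:ℝ) • β = γ - β := by module
    rwa [hmod] at hrefl
  obtain ⟨d, hd1, hd2, hd3⟩ := hΔ.2.2 _ hγβΦ
  set c'R := c'.mapRange (Int.cast : ℤ → ℝ) Int.cast_zero with hcR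
  set dR := d.mapRange (Int.cast : ℤ → ℝ) Int.cast_zero with hdR
  have hEq : dR = c'R - Finsupp.single β 1 := by
    apply RS.base_unique hΔ.2.1
    · refine subset_trans ?_ hd1
      intro v hv
      exact Finsupp.support_mapRange (Finset.mem_coe.1 hv)
    · intro v hv
      have hmem := Finsupp.support_sub (f := c'R) (g := Finsupp.single β (1:ℝ))
        (Finset.mem_coe.1 hv)
      rcases Finset.mem_union.1 hmem with h | h
      · exact hs (Finsupp.support_mapRange h)
      · have hvb : v = β := by simpa using Finsupp.support_single_subset h
        exact hvb ▸ hβΔ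
    · rw [RS.intCast_sum, ← hd2,
        Finsupp.sum_sub_index (fun a b₁ b₂ => sub_smul b₁ b₂ a),
        RS.intCast_sum, ← hrep,
        Finsupp.sum_single_index (zero_smul ℝ β), one_smul]
  obtain ⟨v, hvs⟩ : c'.support.Nonempty := by
    rw [Finsupp.support_nonempty_iff]
    intro h0
    rw [h0] at hrep
    simp at hrep
    exact hΦ.ne_zero γ hγ hrep
  have hvβ : v ≠ β := by
    intro h; rw [h] at hvs; exact (Finsupp.mem_support_iff.1 hvs) hβ0
  have hdβ : (d β : ℝ) = -1 := by
    have h1 : dR β = -1 := by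
      rw [hEq, Finsupp.sub_apply, Finsupp.single_eq_same, hcR, Finsupp.mapRange_apply, hβ0,
        Int.cast_zero, zero_sub]
    rw [← h1, hdR, Finsupp.mapRange_apply]
  have hdv : (0:ℝ) < (d v : ℝ) := by
    have h1 : dR v = (c' v : ℝ) := by
      rw [hEq, Finsupp.sub_apply, Finsupp.single_apply, if_neg (Ne.symm hvβ), sub_zero, hcR,
        Finsupp.mapRange_apply]
    have h2 : 0 < c' v := lt_of_le_of_ne (hpos v) (Ne.symm (Finsupp.mem_support_iff.1 hvs))
    have h3 : dR v = (d v : ℝ) := by rw [hdR, Finsupp.mapRange_apply]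
    rw [← h3, h1]
    exact_mod_cast h2
  have hdβ' : d β = -1 := by exact_mod_cast hdβ
  have hdv' : 0 < d v := by exact_mod_cast hdv
  rcases hd3 with h | h
  · have := h β; omega
  · have := h v; omega

lemma RS.mem_span_of_orth (hΦ : IsRootSystem Φ) (hΔ : IsBase Φ Δ) {Δ₁ Δ₂ : Set V}
    (hsub1 : Δ₁ ⊆ Δ) (hsub2 : Δ₂ ⊆ Δ) (hcover : Δ ⊆ Δ₁ ∪ Δ₂)
    (hdisj : ∀ x ∈ Δ₁, x ∉ Δ₂)
    (horth : ∀ x ∈ Δ₁, ∀ y ∈ Δ₂, ⟪x, y⟫ = 0) :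
    ∀ α ∈ Φ, α ∈ Submodule.span ℝ Δ₁ ∨ α ∈ Submodule.span ℝ Δ₂ := by
  classical
  have key : ∀ n : ℕ, ∀ α ∈ Φ, ∀ c : V →₀ ℤ, (c.support : Set V) ⊆ Δ →
      α = c.sum (fun v m => (m : ℝ) • v) → (∀ v, 0 ≤ c v) →
      (c.sum fun _ m => m).toNat ≤ n →
      ((c.support : Set V) ⊆ Δ₁ ∨ (c.support : Set V) ⊆ Δ₂) := by
    intro n
    induction n with
    | zero =>
      intro α hαΦ c hsupp hsum hpos hn
      exfalso
      have hc0 : c = 0 := by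
        ext v
        simp only [Finsupp.coe_zero, Pi.zero_apply]
        by_contra hv
        have hvs : v ∈ c.support := Finsupp.mem_support_iff.2 (by simpa using hv)
        have h1 : (1:ℤ) ≤ c v := by have := hpos v; omega
        have hsum_ge : (1:ℤ) ≤ c.sum fun _ m => m :=
          le_trans h1 (Finset.single_le_sum (f := fun v => c v) (fun i _ => hpos i) hvs)
        omega
      rw [hc0] at hsum
      simp at hsum
      exact hΦ.ne_zero α hαΦ hsum
    | succ n ih =>
      intro α hαΦ c hsupp hsum hpos hn
      by_cases hαΔ : α ∈ Δ
      · -- c = single α 1, support = {α}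
        have hEq : c.mapRange (Int.cast : ℤ → ℝ) Int.cast_zero = Finsupp.single α (1:ℝ) := by
          apply RS.base_unique hΔ.2.1
          · refine subset_trans ?_ hsupp
            intro v hv
            exact Finsupp.support_mapRange (Finset.mem_coe.1 hv)
          · intro v hv
            have hvb : v = α := by
              simpa using Finsupp.support_single_subset (Finset.mem_coe.1 hv)
            exact hvb ▸ hαΔ
          · rw [RS.intCast_sum, ← hsum, Finsupp.sum_single_index (zero_smul ℝ α), one_smul]
        have hss : (c.support : Set V) ⊆ {α} := by
          intro v hv
          have h1 : (c v : ℝ) ≠ 0 := by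
            exact_mod_cast Finsupp.mem_support_iff.1 (Finset.mem_coe.1 hv)
          have h2 : (Finsupp.single α (1:ℝ)) v ≠ 0 := by
            rw [← hEq, Finsupp.mapRange_apply]; exact h1
          by_contra hne
          rw [Finsupp.single_apply, if_neg (by simpa using (Ne.symm (by simpa using hne)))] at h2
          exact h2 rfl
        rcases hcover hαΔ with h | h
        · exact Or.inl (subset_trans hss (Set.singleton_subset_iff.2 h))
        · exact Or.inr (subset_trans hss (Set.singleton_subset_iff.2 h))
      have hαα : (0:ℝ) < ⟪α, α⟫ :=
        lt_of_le_of_ne real_inner_self_nonneg (Ne.symm (inner_self_ne_zero.2 (hΦ.ne_zero α hαΦ)))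
      have hβex : ∃ β ∈ c.support, 0 < c β ∧ 0 < ⟪α, β⟫ := by
        by_contra hno
        push_neg at hno
        have hin : ⟪α, α⟫ = ∑ v ∈ c.support, (c v : ℝ) * ⟪α, v⟫ := by
          nth_rewrite 2 [hsum]
          rw [Finsupp.sum, inner_sum]
          exact Finset.sum_congr rfl fun v _ => real_inner_smul_right α v _
        have hle : ∑ v ∈ c.support, (c v : ℝ) * ⟪α, v⟫ ≤ 0 := by
          apply Finset.sum_nonpos
          intro v hv
          have hcv := hpos v
          rcases lt_or_eq_of_le hcv with hlt | heq
          · have hip : ⟪α, v⟫ ≤ 0 := hno v hv hlt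
            have hge : (0:ℝ) ≤ (c v : ℝ) := by exact_mod_cast hcv
            exact mul_nonpos_iff.2 (Or.inl ⟨hge, hip⟩)
          · rw [← heq]; simp
        rw [hin] at hαα
        linarith
      obtain ⟨β, hβs, hβpos, hβip⟩ := hβex
      have hβΔ : β ∈ Δ := hsupp hβs
      have hβΦ : β ∈ Φ := hΔ.1 hβΔ
      have hαβ : α ≠ β := fun h => hαΔ (h ▸ hβΔ)
      have hsub : α - β ∈ Φ := RS.sub_mem hΦ hαΦ hβΦ hβip hαβ
      set c' : V →₀ ℤ := c - Finsupp.single β 1 with hc'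
      have hsum' : α - β = c'.sum (fun v m => (m : ℝ) • v) := by
        rw [hc', Finsupp.sum_sub_index (by intro a b₁ b₂; push_cast; rw [sub_smul]),
          Finsupp.sum_single_index (by simp), Int.cast_one, one_smul, hsum]
      have hsupp' : (c'.support : Set V) ⊆ Δ := by
        intro v hv
        have hmem := Finsupp.support_sub (f := c) (g := Finsupp.single β 1)
          (Finset.mem_coe.1 hv)
        rcases Finset.mem_union.1 hmem with h | h
        · exact hsupp h
        · have hvb : v = β := by
            have := Finsupp.support_single_subset h
            simpa using this
          exact hvb ▸ hβΔ
      have hpos' : ∀ v, 0 ≤ c' v := by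
        intro v
        by_cases hvβ : v = β
        · subst hvβ
          rw [hc']
          simp only [Finsupp.sub_apply, Finsupp.single_eq_same]
          omega
        · rw [hc']
          simp only [Finsupp.sub_apply, Finsupp.single_apply, if_neg (Ne.symm hvβ)]
          have := hpos v; omega
      have hsum_le : (c'.sum fun _ m => m).toNat ≤ n := by
        have h1 : (c'.sum fun _ m => m) = (c.sum fun _ m => m) - 1 := by
          rw [hc', Finsupp.sum_sub_index (fun a b₁ b₂ => rfl),
            Finsupp.sum_single_index rfl]
        have h2 : (1:ℤ) ≤ c.sum fun _ m => m :=
          le_trans hβpos (Finset.single_le_sum (f := fun v => c v) (fun i _ => hpos i) hβs)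
        omega
      have hsupp_cup : (c.support : Set V) ⊆ (c'.support : Set V) ∪ {β} := by
        intro v hv
        by_cases hvβ : v = β
        · exact Or.inr (by simp [hvβ])
        · left
          have hcv : c v ≠ 0 := Finsupp.mem_support_iff.1 (Finset.mem_coe.1 hv)
          have : c' v ≠ 0 := by
            rw [hc']
            simp only [Finsupp.sub_apply, Finsupp.single_apply, if_neg (Ne.symm hvβ)]
            omega
          exact Finset.mem_coe.2 (Finsupp.mem_support_iff.2 this)
      have hβ0' : ∀ (side : Set V), β ∉ side → (c'.support : Set V) ⊆ side → c' β = 0 := by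
        intro side hβside hcside
        by_contra h0
        exact hβside (hcside (Finset.mem_coe.2 (Finsupp.mem_support_iff.2 h0)))
      rcases ih (α - β) hsub c' hsupp' hsum' hpos' hsum_le with h1 | h1 <;>
        rcases hcover hβΔ with hβ1 | hβ2
      · left
        refine subset_trans hsupp_cup (Set.union_subset h1 ?_)
        simpa using hβ1
      · -- supp c' ⊆ Δ₁, β ∈ Δ₂ : escape
        exfalso
        have hβnot : β ∉ Δ₁ := fun h => hdisj β h hβ2
        refine RS.no_escape hΦ hΔ hβΔ hsub (by rwa [sub_add_cancel]) c' hsupp' hsum' hpos'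
          (hβ0' Δ₁ hβnot h1) ?_
        intro v hv
        exact horth v (h1 (Finset.mem_coe.2 hv)) β hβ2
      · -- supp c' ⊆ Δ₂, β ∈ Δ₁ : escape
        exfalso
        have hβnot : β ∉ Δ₂ := hdisj β hβ1
        refine RS.no_escape hΦ hΔ hβΔ hsub (by rwa [sub_add_cancel]) c' hsupp' hsum' hpos'
          (hβ0' Δ₂ hβnot h1) ?_
        intro v hv
        rw [real_inner_comm]
        exact horth β hβ1 v (h1 (Finset.mem_coe.2 hv))
      · right
        refine subset_trans hsupp_cup (Set.union_subset h1 ?_)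
        simpa using hβ2
  have span_of : ∀ (c : V →₀ ℤ) (side : Set V), (c.support : Set V) ⊆ side →
      c.sum (fun v m => (m : ℝ) • v) ∈ Submodule.span ℝ side := by
    intro c side hside
    apply Submodule.sum_mem
    intro v hv
    exact Submodule.smul_mem _ _ (Submodule.subset_span (hside (Finset.mem_coe.2 hv)))
  intro α hαΦ
  obtain ⟨c, hsupp, hsum, hsign⟩ := hΔ.2.2 α hαΦ
  rcases hsign with hpos | hneg
  · rcases key _ α hαΦ c hsupp hsum hpos le_rfl with h | h
    · exact Or.inl (hsum ▸ span_of c Δ₁ h)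
    · exact Or.inr (hsum ▸ span_of c Δ₂ h)
  · have hnegΦ : -α ∈ Φ := RS.neg_mem hΦ hαΦ
    have hrep : -α = (0 - c : V →₀ ℤ).sum (fun v m => (m : ℝ) • v) := by
      rw [Finsupp.sum_sub_index (by intro a b₁ b₂; push_cast; rw [sub_smul]), ← hsum]
      simp
    have hsupp0 : (((0 - c : V →₀ ℤ)).support : Set V) ⊆ Δ := by
      intro v hv
      have hmem := Finsupp.support_sub (f := (0 : V →₀ ℤ)) (g := c) (Finset.mem_coe.1 hv)
      simp only [Finsupp.support_zero, Finset.empty_union] at hmem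
      exact hsupp hmem
    have hpos0 : ∀ v, 0 ≤ (0 - c : V →₀ ℤ) v := by
      intro v
      simp only [Finsupp.sub_apply, Finsupp.coe_zero, Pi.zero_apply]
      have := hneg v; omega
    rcases key _ (-α) hnegΦ _ hsupp0 hrep hpos0 le_rfl with h | h
    · have := hrep ▸ span_of _ Δ₁ h
      exact Or.inl (by simpa using (Submodule.span ℝ Δ₁).neg_mem this)
    · have := hrep ▸ span_of _ Δ₂ h
      exact Or.inr (by simpa using (Submodule.span ℝ Δ₂).neg_mem this)


/-- The Dynkin graph on simple roots: edges are non-orthogonal pairs. -/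
def RS.dynkinGraph (Δ : Set V) : SimpleGraph V where
  Adj u v := u ∈ Δ ∧ v ∈ Δ ∧ u ≠ v ∧ ⟪u, v⟫ ≠ 0
  symm := by
    constructor
    rintro u v ⟨h1, h2, h3, h4⟩
    exact ⟨h2, h1, h3.symm, by rw [real_inner_comm]; exact h4⟩
  loopless := ⟨fun v h => h.2.2.1 rfl⟩

lemma RS.reachable (hΦ : IsRootSystem Φ) (hirr : IsIrreducibleRootSystem Φ)
    (hΔ : IsBase Φ Δ) {u v : V} (hu : u ∈ Δ) (hv : v ∈ Δ) :
    (RS.dynkinGraph Δ).Reachable u v := by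
  by_contra hr
  set R : Set V := {w | w ∈ Δ ∧ (RS.dynkinGraph Δ).Reachable u w} with hR
  have hRu : u ∈ R := ⟨hu, SimpleGraph.Reachable.refl u⟩
  have hvR : v ∈ Δ \ R := ⟨hv, fun h => hr h.2⟩
  have hRsub : R ⊆ Δ := fun w hw => hw.1
  have horth : ∀ x ∈ R, ∀ y ∈ Δ \ R, ⟪x, y⟫ = 0 := by
    intro x hx y hy
    by_contra h
    have hxy : x ≠ y := fun he => hy.2 (he ▸ hx)
    have hadj : (RS.dynkinGraph Δ).Adj x y := ⟨hx.1, hy.1, hxy, h⟩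
    exact hy.2 ⟨hy.1, hx.2.trans hadj.reachable⟩
  have hmix := RS.mem_span_of_orth hΦ hΔ (Δ₁ := R) (Δ₂ := Δ \ R) hRsub Set.diff_subset
    (fun w hw => by by_cases h : w ∈ R; exact Or.inl h; exact Or.inr ⟨hw, h⟩)
    (fun x hx hx2 => hx2.2 hx) horth
  apply hirr
  refine ⟨Φ ∩ (Submodule.span ℝ R : Set V), Φ ∩ (Submodule.span ℝ (Δ \ R) : Set V),
    ⟨u, hΔ.1 hu, Submodule.subset_span hRu⟩,
    ⟨v, hΔ.1 hv, Submodule.subset_span hvR⟩, ?_, ?_⟩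
  · ext x
    constructor
    · intro hx
      rcases hmix x hx with h | h
      · exact Or.inl ⟨hx, h⟩
      · exact Or.inr ⟨hx, h⟩
    · rintro (⟨h, _⟩ | ⟨h, _⟩) <;> exact h
  · rintro x ⟨_, hx⟩ y ⟨_, hy⟩
    exact RS.span_orth horth x hx y hy

lemma RS.walk_support_mem {G : SimpleGraph V} {Δ : Set V}
    (hadj : ∀ {x y : V}, G.Adj x y → x ∈ Δ ∧ y ∈ Δ) {a b : V} (w : G.Walk a b)
    (ha : a ∈ Δ) : ∀ x ∈ w.support, x ∈ Δ := by
  induction w with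
  | nil => intro x hx; simp at hx; exact hx ▸ ha
  | cons h p ih =>
    intro x hx
    rw [SimpleGraph.Walk.support_cons, List.mem_cons] at hx
    rcases hx with hx | hx
    · exact hx ▸ ha
    · exact ih (hadj h).2 x hx

lemma RS.walk_escape {G : SimpleGraph V} {C : Set V} {a b : V} (w : G.Walk a b)
    (hb : b ∉ C) :
    ∀ _ : a ∈ C, ∃ (c : V) (q : G.Walk a c), q.IsPath ∧ c ∉ C ∧
      ∀ x ∈ q.support, x ≠ c → x ∈ C := by
  classical
  induction w with
  | nil => intro ha; exact absurd ha hb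
  | @cons u x y h p ih =>
    intro ha
    by_cases hx : x ∈ C
    · obtain ⟨c, q, hq, hc, hall⟩ := ih hb hx
      refine ⟨c, (SimpleGraph.Walk.cons h q).bypass, SimpleGraph.Walk.bypass_isPath _, hc, ?_⟩
      intro z hz hzc
      have hz' := SimpleGraph.Walk.support_bypass_subset _ hz
      rw [SimpleGraph.Walk.support_cons, List.mem_cons] at hz'
      rcases hz' with hz' | hz'
      · exact hz' ▸ ha
      · exact hall z hz' hzc
    · refine ⟨x, SimpleGraph.Walk.cons h SimpleGraph.Walk.nil, ?_, hx, ?_⟩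
      · rw [SimpleGraph.Walk.isPath_def]
        simp [h.ne]
      · intro z hz hzx
        rw [SimpleGraph.Walk.support_cons] at hz
        simp at hz
        rcases hz with hz | hz
        · exact hz ▸ ha
        · exact absurd hz hzx


lemma RS.dynkinGraph_adj {Δ : Set V} {u v : V} :
    (RS.dynkinGraph Δ).Adj u v ↔ u ∈ Δ ∧ v ∈ Δ ∧ u ≠ v ∧ ⟪u, v⟫ ≠ 0 := Iff.rfl

end Aux

/-- If `[T ∪ -T]` is a proper subset of `Φ` and the simple root `α` lies in
`[T ∪ -T]`, then there is a simple root path starting at `α`, staying in `[T ∪ -T]`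
except at its last vertex, whose last vertex lies outside `[T ∪ -T]`. -/
theorem exists_simpleRootPath_escaping_closure {V : Type*} [NormedAddCommGroup V]
    [InnerProductSpace ℝ V] [FiniteDimensional ℝ V] (Φ Δ T : Set V)
    (hΦ : IsRootSystem Φ) (hirr : IsIrreducibleRootSystem Φ) (hΔ : IsBase Φ Δ)
    (hT : IsClosedSubset Φ T) (hproper : rootClosure Φ (T ∪ -T) ⊂ Φ)
    (α : V) (hα : α ∈ Δ) (hαT : α ∈ rootClosure Φ (T ∪ -T)) :
    ∃ (k : ℕ) (β : ℕ → V), IsSimpleRootPath Δ k β ∧ β 0 = α ∧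
      (∀ i, i + 1 < k → β i ∈ rootClosure Φ (T ∪ -T)) ∧
      β (k - 1) ∉ rootClosure Φ (T ∪ -T) := by
  classical
  set C := rootClosure Φ (T ∪ -T) with hCdef
  have hΦneg : ∀ x ∈ Φ, -x ∈ Φ := fun x hx => RS.neg_mem hΦ hx
  have hTN : T ∪ -T ⊆ Φ := by
    rintro x (hx | hx)
    · exact hT.1 hx
    · have h1 : -x ∈ T := Set.mem_neg.1 hx
      have h2 := hT.1 h1
      simpa using hΦneg _ h2
  have hΦmem : Φ ∈ {U : Set V | IsClosedSubset Φ U ∧ (T ∪ -T) ⊆ U} :=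
    ⟨⟨Set.Subset.rfl, fun _ _ _ _ h => h⟩, hTN⟩
  have hCsub : C ⊆ Φ := Set.sInter_subset_of_mem hΦmem
  have hTC : T ∪ -T ⊆ C := fun x hx => Set.mem_sInter.2 fun _ hU => hU.2 hx
  have hCclosed : IsClosedSubset Φ C := by
    refine ⟨hCsub, fun x hx y hy hxy => Set.mem_sInter.2 fun U hU => ?_⟩
    exact hU.1.2 x (Set.mem_sInter.1 hx U hU) y (Set.mem_sInter.1 hy U hU) hxy
  have hCneg : ∀ x ∈ C, -x ∈ C := by
    have hUmem : {x : V | -x ∈ C} ∈ {U : Set V | IsClosedSubset Φ U ∧ (T ∪ -T) ⊆ U} := by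
      constructor
      · constructor
        · intro x hx
          have h1 : -x ∈ Φ := hCsub hx
          simpa using hΦneg _ h1
        · intro x hx y hy hxy
          have h4 : -(x + y) = -x + -y := by abel
          have hnxy : -x + -y ∈ Φ := by
            have h3 := hΦneg _ hxy
            rwa [h4] at h3
          have h5 := hCclosed.2 _ hx _ hy hnxy
          show -(x + y) ∈ C
          rwa [← h4] at h5
      · rintro x (hx | hx)
        · show -x ∈ C
          exact hTC (Or.inr (Set.neg_mem_neg.2 hx))
        · show -x ∈ C
          exact hTC (Or.inl (Set.mem_neg.1 hx))
    intro x hx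
    exact Set.mem_sInter.1 hx _ hUmem
  obtain ⟨ρ, hρΦ, hρC⟩ : ∃ ρ, ρ ∈ Φ ∧ ρ ∉ C := by
    obtain ⟨ρ, h1, h2⟩ := Set.not_subset.1 hproper.2
    exact ⟨ρ, h1, h2⟩
  obtain ⟨γ, hγΔ, hγC⟩ : ∃ γ ∈ Δ, γ ∉ C := by
    by_contra h
    push_neg at h
    exact hρC (RS.subset_of_base_subset hΦ hΔ hCclosed hCneg h hρΦ)
  obtain ⟨w⟩ := RS.reachable hΦ hirr hΔ hα hγΔ
  obtain ⟨c, q, hq, hcC, hall⟩ := RS.walk_escape w hγC hαT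
  have hsuppΔ := RS.walk_support_mem (G := RS.dynkinGraph Δ)
    (fun {x y} h => ⟨h.1, h.2.1⟩) q hα
  set l := q.support with hl
  have hnodup : l.Nodup := hq.support_nodup
  have hlen : 1 ≤ l.length := by
    have h1 := List.length_pos_iff.2 (show l ≠ [] from q.support_ne_nil)
    omega
  have hlast : l.getD (l.length - 1) α = c := by
    rw [List.getD_eq_getElem _ _ (by omega)]
    have h1 := q.getLast_support
    rw [List.getLast_eq_getElem] at h1
    exact h1
  have hinj : ∀ i < l.length, ∀ j < l.length, l.getD i α = l.getD j α → i = j := by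
    intro i hi j hj hij
    rw [List.getD_eq_getElem _ _ hi, List.getD_eq_getElem _ _ hj] at hij
    have h2 := List.nodup_iff_injective_get.1 hnodup
      (show l.get ⟨i, hi⟩ = l.get ⟨j, hj⟩ by simpa [List.get_eq_getElem] using hij)
    simpa using congrArg Fin.val h2
  refine ⟨l.length, fun i => l.getD i α, ⟨hlen, ?_, hinj, ?_⟩, ?_, ?_, ?_⟩
  · intro i hi
    show l.getD i α ∈ Δ
    rw [List.getD_eq_getElem _ _ hi]
    exact hsuppΔ _ (List.getElem_mem hi)
  · intro i hi
    show ⟪l.getD i α, l.getD (i + 1) α⟫ ≠ 0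
    have hch := List.isChain_iff_getElem.1 q.isChain_adj_support i (by
      have : l.length = q.support.length := by rw [hl]
      omega)
    rw [List.getD_eq_getElem _ _ (Nat.lt_of_succ_lt hi), List.getD_eq_getElem _ _ hi]
    have hne := (RS.dynkinGraph_adj).1 hch
    have hne2 := hne.2.2.2
    exact hne2
  · rw [hl, q.support_eq_cons]
    rfl
  · intro i hi
    show l.getD i α ∈ C
    have hiC : l.getD i α ∈ l := by
      rw [List.getD_eq_getElem _ _ (Nat.lt_of_succ_lt hi)]
      exact List.getElem_mem _
    refine hall _ (by rwa [hl] at hiC) ?_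
    intro heq
    have := hinj i (by omega) (l.length - 1) (by omega) (by rw [hlast]; exact heq)
    omega
  · show l.getD (l.length - 1) α ∉ C
    rw [hlast]
    exact hcC
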